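/- arXiv:2302.11331 — 6 statements merged into one kernel-verified Lean document; each statement's English description precedes it below -/
import Mathlib

section
/- For every squarefree positive integer n and every integer k ≥ 2, there exists a divisor d of n such that d ≤ n^{1/k} and τ(n) ≤ 2^k · τ(d)^k. -/
lemma tau_squarefree {n : ℕ} (hn : Squarefree n) :
    n.divisors.card = 2 ^ n.primeFactors.card := by
  rw [Nat.card_divisors hn.ne_zero]
  rw [show (∏ p ∈ n.primeFactors, (n.factorization p + 1)) = ∏ _p ∈ n.primeFactors, 2 from
    Finset.prod_congr rfl fun p hp => by
      rw [Nat.factorization_eq_one_of_squarefree hn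
        (Nat.prime_of_mem_primeFactors hp) (Nat.dvd_of_mem_primeFactors hp)],
    Finset.prod_const]

lemma aux (k : ℕ) (hk : 1 ≤ k) : ∀ n : ℕ, 0 < n → Squarefree n →
    ∃ d : ℕ, d ∣ n ∧ d ^ k ≤ n ∧ n.divisors.card ≤ 2 ^ k * d.divisors.card ^ k := by
  intro n
  induction n using Nat.strong_induction_on with
  | _ n ih =>
  intro hn hsf
  by_cases hr : n.primeFactors.card < k
  · refine ⟨1, one_dvd _, by rw [one_pow]; exact hn, ?_⟩
    rw [tau_squarefree hsf]
    simp only [Nat.divisors_one, Finset.card_singleton, one_pow, mul_one]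
    exact Nat.pow_le_pow_right (by norm_num) hr.le
  · push_neg at hr
    have hPne : n.primeFactors.Nonempty := Finset.card_pos.mp (lt_of_lt_of_le hk hr)
    set p := n.primeFactors.min' hPne with hp
    have hpmem : p ∈ n.primeFactors := Finset.min'_mem _ _
    have hcard : k - 1 ≤ (n.primeFactors.erase p).card := by
      rw [Finset.card_erase_of_mem hpmem]; omega
    obtain ⟨T, hTsub, hTcard⟩ := Finset.exists_subset_card_eq hcard
    set s : Finset ℕ := insert p T with hs
    have hpT : p ∉ T := fun h => (Finset.mem_erase.mp (hTsub h)).1 rfl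
    have hssub : s ⊆ n.primeFactors := by
      intro q hq
      rcases Finset.mem_insert.mp hq with h | h
      · exact h ▸ hpmem
      · exact Finset.mem_of_mem_erase (hTsub h)
    have hscard : s.card = k := by
      rw [hs, Finset.card_insert_of_notMem hpT, hTcard]; omega
    have hsprime : ∀ q ∈ s, q.Prime := fun q hq =>
      Nat.prime_of_mem_primeFactors (hssub hq)
    set a : ℕ := ∏ q ∈ s, q with ha
    have hadvd : a ∣ n := by
      calc a ∣ ∏ q ∈ n.primeFactors, q :=
            Finset.prod_dvd_prod_of_subset _ _ _ hssub
        _ = n := Nat.prod_primeFactors_of_squarefree hsf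
    obtain ⟨m, hm⟩ := hadvd
    have ha0 : 0 < a := Finset.prod_pos fun q hq => (hsprime q hq).pos
    have hm0 : 0 < m := by
      rcases Nat.eq_zero_or_pos m with h | h
      · exfalso; rw [h, mul_zero] at hm; omega
      · exact h
    have hsfam : Squarefree (a * m) := hm ▸ hsf
    have hcop : Nat.Coprime a m := (Nat.squarefree_mul_iff.mp hsfam).1
    have hsfm : Squarefree m := (Nat.squarefree_mul_iff.mp hsfam).2.2
    -- p^k ≤ a
    have hpk : p ^ k ≤ a := by
      rw [← hscard]
      exact Finset.pow_card_le_prod s _ p fun q hq =>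
        Finset.min'_le _ _ (hssub hq)
    have hp2 : 2 ≤ p := (Nat.prime_of_mem_primeFactors hpmem).two_le
    have ha2 : 2 ≤ a := le_trans (le_trans hp2 (Nat.le_self_pow (by omega) p)) hpk
    have hmlt : m < n := by
      rw [hm]
      calc m = 1 * m := (one_mul m).symm
        _ < a * m := Nat.mul_lt_mul_of_lt_of_le (by omega) le_rfl hm0
    obtain ⟨d, hd1, hd2, hd3⟩ := ih m hmlt hm0 hsfm
    refine ⟨p * d, ?_, ?_, ?_⟩
    · rw [hm]
      exact mul_dvd_mul (Finset.dvd_prod_of_mem _ (Finset.mem_insert_self p T)) hd1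
    · calc (p * d) ^ k = p ^ k * d ^ k := mul_pow p d k
        _ ≤ a * m := Nat.mul_le_mul hpk hd2
        _ = n := hm.symm
    · -- tau computations
      have hτa : a.divisors.card = 2 ^ k := by
        have hsfa : Squarefree a := (Nat.squarefree_mul_iff.mp hsfam).2.1
        rw [tau_squarefree hsfa, ha, Nat.primeFactors_prod hsprime, hscard]
      have hpa : p ∣ a := Finset.dvd_prod_of_mem _ (Finset.mem_insert_self p T)
      have hcoppd : Nat.Coprime p d :=
        Nat.Coprime.coprime_dvd_right hd1 (Nat.Coprime.coprime_dvd_left hpa hcop)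
      have hτpd : (p * d).divisors.card = 2 * d.divisors.card := by
        rw [Nat.Coprime.card_divisors_mul hcoppd,
          (Nat.prime_of_mem_primeFactors hpmem).divisors,
          Finset.card_insert_of_notMem (by simp; omega),
          Finset.card_singleton]
      calc n.divisors.card = (a * m).divisors.card := by rw [hm]
        _ = 2 ^ k * m.divisors.card := by rw [Nat.Coprime.card_divisors_mul hcop, hτa]
        _ ≤ 2 ^ k * (2 ^ k * d.divisors.card ^ k) := Nat.mul_le_mul_left _ hd3
        _ = 2 ^ k * (2 * d.divisors.card) ^ k := by ring
        _ = 2 ^ k * (p * d).divisors.card ^ k := by rw [hτpd]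

/-- For every squarefree positive integer `n` and every integer `k ≥ 2`, there exists a
divisor `d` of `n` such that `d ≤ n^(1/k)` and `τ(n) ≤ 2^k · τ(d)^k`. -/
theorem stmt_1 (n k : ℕ) (hn : 0 < n) (hsf : Squarefree n) (hk : 2 ≤ k) :
    ∃ d : ℕ, d ∣ n ∧ (d : ℝ) ≤ (n : ℝ) ^ ((1 : ℝ) / k) ∧
      n.divisors.card ≤ 2 ^ k * d.divisors.card ^ k := by
  obtain ⟨d, hd1, hd2, hd3⟩ := aux k (by omega) n hn hsf
  refine ⟨d, hd1, ?_, hd3⟩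
  have hk0 : (k : ℝ) ≠ 0 := by positivity
  have h1 : (d : ℝ) = (((d : ℝ) ^ (k : ℕ)) : ℝ) ^ ((1 : ℝ) / k) := by
    rw [← Real.rpow_natCast (d : ℝ) k, ← Real.rpow_mul (by positivity),
      mul_one_div, div_self hk0, Real.rpow_one]
  rw [h1]
  apply Real.rpow_le_rpow (by positivity) _ (by positivity)
  exact_mod_cast hd2
end

section
/- For every positive integer n and every integer k ≥ 2, there exists a divisor d of n such that d ≤ n^{1/k} and τ(n) ≤ 2^{k^2} · τ(d)^{k^3}. -/
open Finset

/-- Among any finset of positive naturals of size at least `m * j`, there is a subset of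
size `m` whose product, raised to the `j`-th power, is at most the total product. -/
lemma exists_small_prod (m : ℕ) : ∀ (j : ℕ), 1 ≤ j → ∀ (S : Finset ℕ),
    (∀ x ∈ S, 1 ≤ x) → m * j ≤ S.card →
    ∃ T ⊆ S, T.card = m ∧ (∏ x ∈ T, x) ^ j ≤ ∏ x ∈ S, x := by
  intro j
  induction j with
  | zero => omega
  | succ j ih =>
    intro _ S hS hcard
    rcases Nat.eq_zero_or_pos j with hj0 | hj1
    · subst hj0
      obtain ⟨T, hTS, hTcard⟩ := Finset.exists_subset_card_eq (by omega : m ≤ S.card)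
      exact ⟨T, hTS, hTcard, by
        rw [pow_one]
        exact Finset.prod_le_prod_of_subset_of_one_le' hTS (fun i hi _ => hS i hi)⟩
    · obtain ⟨T₀, hT₀S, hT₀card⟩ := Finset.exists_subset_card_eq
        (by nlinarith : m ≤ S.card)
      have hcard' : m * j ≤ (S \ T₀).card := by
        rw [Finset.card_sdiff_of_subset hT₀S, hT₀card]
        have : m * (j + 1) = m * j + m := by ring
        omega
      obtain ⟨T, hTS, hTcard, hTprod⟩ := ih hj1 (S \ T₀)
        (fun x hx => hS x (Finset.mem_sdiff.mp hx).1) hcard'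
      have hsplit : (∏ x ∈ S \ T₀, x) * ∏ x ∈ T₀, x = ∏ x ∈ S, x :=
        Finset.prod_sdiff hT₀S
      rcases le_or_gt (∏ x ∈ T, x) (∏ x ∈ T₀, x) with hle | hlt
      · refine ⟨T, hTS.trans Finset.sdiff_subset, hTcard, ?_⟩
        calc (∏ x ∈ T, x) ^ (j + 1) = (∏ x ∈ T, x) ^ j * (∏ x ∈ T, x) := by ring
          _ ≤ (∏ x ∈ S \ T₀, x) * ∏ x ∈ T₀, x := Nat.mul_le_mul hTprod hle
          _ = ∏ x ∈ S, x := hsplit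
      · refine ⟨T₀, hT₀S, hT₀card, ?_⟩
        calc (∏ x ∈ T₀, x) ^ (j + 1) = (∏ x ∈ T₀, x) ^ j * (∏ x ∈ T₀, x) := by ring
          _ ≤ (∏ x ∈ T, x) ^ j * (∏ x ∈ T₀, x) :=
            Nat.mul_le_mul_right _ (Nat.pow_le_pow_left hlt.le j)
          _ ≤ (∏ x ∈ S \ T₀, x) * ∏ x ∈ T₀, x := Nat.mul_le_mul_right _ hTprod
          _ = ∏ x ∈ S, x := hsplit

/-- The divisor count of a product of powers of distinct primes. -/
lemma tau_prod_primes (S : Finset ℕ) (g : ℕ → ℕ) (hS : ∀ p ∈ S, p.Prime) :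
    (∏ p ∈ S, p ^ g p).divisors.card = ∏ p ∈ S, (g p + 1) := by
  induction S using Finset.induction with
  | empty => simp
  | @insert a s ha ih =>
    have hap : a.Prime := hS a (Finset.mem_insert_self a s)
    have hs : ∀ p ∈ s, p.Prime := fun p hp => hS p (Finset.mem_insert_of_mem hp)
    rw [Finset.prod_insert ha, Finset.prod_insert ha]
    have hcop : (a ^ g a).Coprime (∏ p ∈ s, p ^ g p) := by
      apply Nat.Coprime.pow_left
      apply Nat.Coprime.prod_right
      intro p hp
      apply Nat.Coprime.pow_right
      exact (Nat.coprime_primes hap (hs p hp)).mpr (fun h => ha (h ▸ hp))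
    rw [hcop.card_divisors_mul, ih hs]
    congr 1
    rw [Nat.divisors_prime_pow hap, Finset.card_map, Finset.card_range]

/-- Main combinatorial content: there is a divisor `d` with `d ^ k ≤ n` and the
divisor-count bound. -/
theorem tau_pow_bound_aux (n k : ℕ) (hn : 0 < n) (hk : 2 ≤ k) :
    ∃ d : ℕ, d ∣ n ∧ d ^ k ≤ n ∧
      n.divisors.card ≤ 2 ^ (k ^ 2) * d.divisors.card ^ (k ^ 3) := by
  have hk0 : 0 < k := by omega
  have hn' : n ≠ 0 := hn.ne'
  set f := n.factorization with hf
  set P₀ := n.primeFactors.filter (fun p => f p < k) with hP0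
  set P₁ := n.primeFactors.filter (fun p => ¬ f p < k) with hP1
  set ω := P₀.card with hω
  set m := ω / k with hm
  obtain ⟨T, hTsub, hTcard, hTprod⟩ := exists_small_prod m k (by omega) P₀
    (fun p hp => (Nat.prime_of_mem_primeFactors (Finset.mem_filter.mp hp).1).one_lt.le)
    (Nat.div_mul_le_self ω k)
  set c := ∏ p ∈ P₁, p ^ (f p / k) with hc
  set e := ∏ p ∈ T, p with he
  -- `n` as a product over its prime factors
  have hnprod : ∏ p ∈ n.primeFactors, p ^ f p = n := by
    rw [hf]
    exact Nat.factorization_prod_pow_eq_self hn'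
  -- key divisibility
  have hA : (∏ p ∈ P₀, p) * c ^ k ∣ n := by
    have h1 : c ^ k = ∏ p ∈ P₁, p ^ (f p / k * k) := by
      rw [hc, ← Finset.prod_pow]
      exact Finset.prod_congr rfl fun p _ => by rw [← pow_mul]
    have h2 : (∏ p ∈ P₀, p) * c ^ k
        = ∏ p ∈ n.primeFactors, p ^ (if f p < k then 1 else f p / k * k) := by
      rw [h1, ← Finset.prod_filter_mul_prod_filter_not n.primeFactors (fun p => f p < k)]
      congr 1
      · refine Finset.prod_congr rfl fun p hp => ?_
        rw [if_pos (Finset.mem_filter.mp hp).2, pow_one]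
      · exact Finset.prod_congr rfl fun p hp => by
          rw [if_neg (Finset.mem_filter.mp hp).2]
    have hdvd2 : (∏ p ∈ n.primeFactors, p ^ (if f p < k then 1 else f p / k * k))
        ∣ ∏ p ∈ n.primeFactors, p ^ f p := by
      apply Finset.prod_dvd_prod_of_dvd
      intro p hp
      apply pow_dvd_pow
      have hfp : 1 ≤ f p :=
        Nat.Prime.factorization_pos_of_dvd (Nat.prime_of_mem_primeFactors hp) hn'
          (Nat.dvd_of_mem_primeFactors hp)
      by_cases hcase : f p < k
      · rw [if_pos hcase]; exact hfp
      · rw [if_neg hcase]; exact Nat.div_mul_le_self _ _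
    rw [hnprod] at hdvd2
    rw [h2]
    exact hdvd2
  have hd_dvd : c * e ∣ n := by
    refine dvd_trans ?_ hA
    rw [mul_comm (∏ p ∈ P₀, p) (c ^ k)]
    exact mul_dvd_mul (dvd_pow_self c hk0.ne') (Finset.prod_dvd_prod_of_subset T P₀ _ hTsub)
  have hdk : (c * e) ^ k ≤ n := by
    have hcpos : 0 < c ^ k := by
      apply Nat.pow_pos
      apply Finset.prod_pos
      intro p hp
      exact pow_pos (Nat.prime_of_mem_primeFactors (Finset.mem_filter.mp hp).1).pos _
    calc (c * e) ^ k = c ^ k * e ^ k := mul_pow c e k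
      _ ≤ c ^ k * ∏ p ∈ P₀, p := Nat.mul_le_mul_left _ hTprod
      _ = (∏ p ∈ P₀, p) * c ^ k := mul_comm _ _
      _ ≤ n := Nat.le_of_dvd hn hA
  -- divisor counts
  set A := ∏ p ∈ P₁, (f p / k + 1) with hAdef
  have hA1 : 0 < A := Finset.prod_pos fun p _ => Nat.succ_pos _
  have hdisj : Disjoint P₁ T := by
    refine Finset.disjoint_left.mpr fun p hp1 hpT => ?_
    have hp0 := hTsub hpT
    exact (Finset.mem_filter.mp hp1).2 (Finset.mem_filter.mp hp0).2
  have hτd : (c * e).divisors.card = A * 2 ^ m := by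
    have hprime : ∀ p ∈ P₁ ∪ T, p.Prime := by
      intro p hp
      rcases Finset.mem_union.mp hp with h | h
      · exact Nat.prime_of_mem_primeFactors (Finset.mem_filter.mp h).1
      · exact Nat.prime_of_mem_primeFactors (Finset.mem_filter.mp (hTsub h)).1
    have hce : c * e = ∏ p ∈ P₁ ∪ T, p ^ (if p ∈ T then 1 else f p / k) := by
      rw [Finset.prod_union hdisj, hc, he]
      congr 1
      · refine Finset.prod_congr rfl fun p hp => ?_
        rw [if_neg (Finset.disjoint_left.mp hdisj hp)]
      · refine Finset.prod_congr rfl fun p hp => ?_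
        rw [if_pos hp, pow_one]
    rw [hce, tau_prod_primes _ _ hprime, Finset.prod_union hdisj]
    congr 1
    · exact Finset.prod_congr rfl fun p hp => by
        rw [if_neg (Finset.disjoint_left.mp hdisj hp)]
    · rw [Finset.prod_congr rfl (fun p hp => by rw [if_pos hp]), Finset.prod_const, hTcard]
  have h2A : 2 ^ P₁.card ≤ A := by
    rw [← Finset.prod_const]
    apply Finset.prod_le_prod'
    intro p hp
    have : k ≤ f p := by
      have := (Finset.mem_filter.mp hp).2
      omega
    have : 1 ≤ f p / k := (Nat.one_le_div_iff hk0).mpr this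
    omega
  -- the main counting bound
  have hτn : n.divisors.card = (∏ p ∈ P₀, (f p + 1)) * ∏ p ∈ P₁, (f p + 1) := by
    rw [Nat.card_divisors hn',
      ← Finset.prod_filter_mul_prod_filter_not n.primeFactors (fun p => f p < k)]
  have hstep0 : ∏ p ∈ P₀, (f p + 1) ≤ k ^ ω := by
    rw [← Finset.prod_const]
    apply Finset.prod_le_prod'
    intro p hp
    have := (Finset.mem_filter.mp hp).2
    omega
  have hstep1 : ∏ p ∈ P₁, (f p + 1) ≤ k ^ P₁.card * A := by
    rw [← Finset.prod_const, ← Finset.prod_mul_distrib]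
    apply Finset.prod_le_prod'
    intro p _
    have h1 := Nat.div_add_mod (f p) k
    have h2 := Nat.mod_lt (f p) hk0
    rw [Nat.mul_add, Nat.mul_one]
    omega
  have hk2 : k ≤ 2 ^ k := (Nat.lt_two_pow_self (n := k)).le
  have hexp : k * ω ≤ k ^ 2 + m * k ^ 3 := by
    have h1 := Nat.div_add_mod ω k
    have h2 := Nat.mod_lt ω hk0
    have hωle : ω ≤ k * (ω / k) + k := by omega
    rw [hm]
    calc k * ω ≤ k * (k * (ω / k) + k) := Nat.mul_le_mul_left k hωle
      _ = k ^ 2 * (ω / k) + k ^ 2 := by ring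
      _ ≤ k ^ 3 * (ω / k) + k ^ 2 := by
          have hkk : k ^ 2 ≤ k ^ 3 := Nat.pow_le_pow_right (by omega) (by omega)
          exact Nat.add_le_add_right (Nat.mul_le_mul_right _ hkk) _
      _ = k ^ 2 + (ω / k) * k ^ 3 := by ring
  refine ⟨c * e, hd_dvd, hdk, ?_⟩
  calc n.divisors.card = (∏ p ∈ P₀, (f p + 1)) * ∏ p ∈ P₁, (f p + 1) := hτn
    _ ≤ k ^ ω * (k ^ P₁.card * A) := Nat.mul_le_mul hstep0 hstep1
    _ ≤ (2 ^ k) ^ ω * ((2 ^ P₁.card) ^ k * A) := by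
        apply Nat.mul_le_mul
        · exact Nat.pow_le_pow_left hk2 ω
        · apply Nat.mul_le_mul_right
          calc k ^ P₁.card ≤ (2 ^ k) ^ P₁.card := Nat.pow_le_pow_left hk2 _
            _ = (2 ^ P₁.card) ^ k := by rw [← pow_mul, ← pow_mul, mul_comm]
    _ ≤ 2 ^ (k * ω) * (A ^ k * A) := by
        rw [← pow_mul, mul_comm k ω]
        exact Nat.mul_le_mul_left _ (Nat.mul_le_mul_right _ (Nat.pow_le_pow_left h2A k))
    _ = 2 ^ (k * ω) * A ^ (k + 1) := by rw [pow_succ]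
    _ ≤ 2 ^ (k ^ 2 + m * k ^ 3) * A ^ (k ^ 3) := by
        apply Nat.mul_le_mul
        · exact Nat.pow_le_pow_right (by omega) hexp
        · exact Nat.pow_le_pow_right hA1 (by nlinarith)
    _ = 2 ^ (k ^ 2) * ((c * e).divisors.card) ^ (k ^ 3) := by
        rw [hτd, mul_pow, pow_add, ← pow_mul, mul_comm m (k ^ 3), pow_mul]
        ring

/-- For every positive integer `n` and every integer `k ≥ 2`, there exists a divisor `d`
of `n` such that `d ≤ n^(1/k)` and `τ(n) ≤ 2^(k²) · τ(d)^(k³)`. -/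
theorem stmt_2 (n k : ℕ) (hn : 0 < n) (hk : 2 ≤ k) :
    ∃ d : ℕ, d ∣ n ∧ (d : ℝ) ≤ (n : ℝ) ^ ((1 : ℝ) / k) ∧
      n.divisors.card ≤ 2 ^ (k ^ 2) * d.divisors.card ^ (k ^ 3) := by
  obtain ⟨d, hdvd, hdk, hτ⟩ := tau_pow_bound_aux n k hn hk
  refine ⟨d, hdvd, ?_, hτ⟩
  have hkR : (k : ℝ) ≠ 0 := Nat.cast_ne_zero.mpr (by omega)
  have hdr : ((d : ℝ)) ^ (k : ℕ) ≤ (n : ℝ) := by exact_mod_cast hdk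
  have h1 : (d : ℝ) = (((d : ℝ)) ^ (k : ℕ)) ^ ((1 : ℝ) / k) := by
    rw [← Real.rpow_natCast (d : ℝ) k, ← Real.rpow_mul (Nat.cast_nonneg d),
      mul_one_div, div_self hkR, Real.rpow_one]
  rw [h1]
  exact Real.rpow_le_rpow (by positivity) hdr (by positivity)
end

section
/- For any positive integer d and any integer a, the absolute value of the sum of χ(a) over all primitive Dirichlet characters χ modulo d is at most gcd(a−1, d). -/
open scoped Classical

open DirichletCharacter

private lemma neZero_of_dvd {n e : ℕ} (hn : n ≠ 0) (he : e ∣ n) : NeZero e :=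
  ⟨fun h => hn (Nat.eq_zero_of_zero_dvd (h ▸ he))⟩

/-- Simultaneous unit lift via CRT. -/
private lemma exists_unit_lift {n e m : ℕ} (hn : n ≠ 0) (he : e ∣ n) (hm : m ∣ n)
    (hg : Nat.gcd m e ∣ e) (x : (ZMod e)ˣ) (hx : ZMod.unitsMap hg x = 1) :
    ∃ y : (ZMod n)ˣ, ZMod.unitsMap he y = x ∧ ZMod.unitsMap hm y = 1 := by
  haveI : NeZero n := ⟨hn⟩
  haveI : NeZero e := neZero_of_dvd hn he
  haveI : NeZero m := neZero_of_dvd hn hm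
  set xv := ((x : ZMod e)).val with hxv
  have hxe : ((xv : ℕ) : ZMod e) = (x : ZMod e) := ZMod.natCast_zmod_val _
  have hx1 : xv ≡ 1 [MOD Nat.gcd e m] := by
    have h1 : ((xv : ℕ) : ZMod (Nat.gcd m e)) = 1 := by
      have := congrArg (fun u : (ZMod (Nat.gcd m e))ˣ => (u : ZMod (Nat.gcd m e))) hx
      simpa [ZMod.unitsMap_def, ← hxe, ZMod.cast_natCast hg] using this
    rw [Nat.gcd_comm]
    have := (ZMod.natCast_eq_natCast_iff xv 1 (Nat.gcd m e)).mp (by simpa using h1)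
    exact this
  obtain ⟨z, hz1, hz2⟩ := Nat.chineseRemainder' hx1
  have hcop_e : Nat.Coprime z e := by
    have h2 : Nat.Coprime xv e := by
      rw [← ZMod.isUnit_iff_coprime]
      rw [hxe]; exact x.isUnit
    unfold Nat.Coprime at *
    rw [Nat.ModEq.gcd_eq hz1]; exact h2
  have hcop_m : Nat.Coprime z m := by
    unfold Nat.Coprime at *
    rw [Nat.ModEq.gcd_eq hz2]; exact Nat.gcd_one_left m
  have hL : Nat.lcm e m ∣ n := Nat.lcm_dvd he hm
  haveI : NeZero (Nat.lcm e m) := neZero_of_dvd hn hL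
  have hzu : IsUnit ((z : ℕ) : ZMod (Nat.lcm e m)) := by
    rw [ZMod.isUnit_iff_coprime]
    exact Nat.Coprime.coprime_dvd_right (Nat.lcm_dvd_mul e m) (Nat.Coprime.mul_right hcop_e hcop_m)
  obtain ⟨y, hy⟩ := ZMod.unitsMap_surjective hL hzu.unit
  have key : ∀ (k : ℕ) (hk : k ∣ Nat.lcm e m) (w : ℕ) (hw : z ≡ w [MOD k]),
      ((ZMod.unitsMap (hk.trans hL) y : ZMod k)) = ((w : ℕ) : ZMod k) := by
    intro k hk w hw
    have h3 : ZMod.unitsMap (hk.trans hL) y = ZMod.unitsMap hk (ZMod.unitsMap hL y) := by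
      rw [← MonoidHom.comp_apply, ZMod.unitsMap_comp]
    rw [h3, hy]
    have : ((hzu.unit : ZMod (Nat.lcm e m))) = ((z : ℕ) : ZMod (Nat.lcm e m)) := hzu.unit_spec
    simp only [ZMod.unitsMap_def, Units.coe_map, this, MonoidHom.coe_coe, ZMod.castHom_apply,
      ZMod.cast_natCast hk]
    exact (ZMod.natCast_eq_natCast_iff z w k).mpr hw
  refine ⟨y, ?_, ?_⟩
  · have := key e (Nat.dvd_lcm_left e m) xv hz1
    have h4 : ZMod.unitsMap he y = ZMod.unitsMap ((Nat.dvd_lcm_left e m).trans hL) y := rfl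
    apply Units.ext
    rw [h4, this, hxe]
  · have := key m (Nat.dvd_lcm_right e m) 1 hz2
    have h4 : ZMod.unitsMap hm y = ZMod.unitsMap ((Nat.dvd_lcm_right e m).trans hL) y := rfl
    apply Units.ext
    rw [h4, this]
    simp

private lemma ft_down {n e m : ℕ} (hn : n ≠ 0) (he : e ∣ n) (hm : m ∣ n)
    (ψ : DirichletCharacter ℂ e) (h : FactorsThrough (changeLevel he ψ) m) :
    FactorsThrough ψ (Nat.gcd m e) := by
  haveI : NeZero e := neZero_of_dvd hn he
  rw [factorsThrough_iff_ker_unitsMap (Nat.gcd_dvd_right m e)]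
  intro x hx
  rw [MonoidHom.mem_ker] at hx
  obtain ⟨y, hy1, hy2⟩ := exists_unit_lift hn he hm (Nat.gcd_dvd_right m e) x hx
  obtain ⟨hd, χ₀, hχ₀⟩ := h
  rw [MonoidHom.mem_ker]
  have h1 : ψ.toUnitHom x = (changeLevel he ψ).toUnitHom y := by
    rw [changeLevel_toUnitHom, MonoidHom.comp_apply, hy1]
  have hy2' : ZMod.unitsMap hd y = 1 := hy2
  rw [h1, hχ₀, changeLevel_toUnitHom, MonoidHom.comp_apply, hy2', map_one]

private lemma conductor_changeLevel {n e : ℕ} (hn : n ≠ 0) (he : e ∣ n)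
    (ψ : DirichletCharacter ℂ e) :
    conductor (changeLevel he ψ) = conductor ψ := by
  have h1 : conductor (changeLevel he ψ) ≤ conductor ψ := by
    apply Nat.sInf_le
    refine ⟨(conductor_dvd_level ψ).trans he, (factorsThrough_conductor ψ).χ₀, ?_⟩
    conv_lhs => rw [(factorsThrough_conductor ψ).eq_changeLevel]
    rw [← changeLevel_trans]
  have h2 : conductor ψ ≤ conductor (changeLevel he ψ) := by
    have hft := factorsThrough_conductor (changeLevel he ψ)
    have h3 := ft_down hn he (conductor_dvd_level (changeLevel he ψ)) ψ hft
    have h4 : conductor ψ ≤ Nat.gcd (conductor (changeLevel he ψ)) e := Nat.sInf_le h3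
    refine h4.trans (Nat.le_of_dvd ?_ (Nat.gcd_dvd_left _ _))
    exact Nat.pos_of_ne_zero (by haveI : NeZero n := ⟨hn⟩; exact conductor_ne_zero (changeLevel he ψ))
  exact le_antisymm h1 h2

private lemma changeLevel_intCast {n e : ℕ} [NeZero n] (he : e ∣ n)
    (ψ : DirichletCharacter ℂ e) (a : ℤ) (ha : IsUnit ((a : ZMod n))) :
    (changeLevel he ψ) ((a : ZMod n)) = ψ ((a : ZMod e)) := by
  rw [show ((a : ZMod n)) = ↑ha.unit from (IsUnit.unit_spec ha).symm,
      changeLevel_eq_cast_of_dvd, IsUnit.unit_spec]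
  congr 1
  exact ZMod.cast_intCast he a

private lemma sum_decomp {n : ℕ} (hn : n ≠ 0) (a : ℤ) (ha : IsUnit ((a : ZMod n))) :
    (∑ e ∈ n.divisors, ∑ ψ ∈ Finset.univ.filter
        (fun ψ : DirichletCharacter ℂ e => ψ.IsPrimitive), ψ ((a : ZMod e)))
    = ∑ χ : DirichletCharacter ℂ n, χ ((a : ZMod n)) := by
  haveI : NeZero n := ⟨hn⟩
  rw [Finset.sum_sigma']
  refine Finset.sum_bij
    (i := fun p hp => changeLevel
      (Nat.dvd_of_mem_divisors (Finset.mem_sigma.mp hp).1) p.2) ?_ ?_ ?_ ?_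
  · intro p hp; exact Finset.mem_univ _
  · rintro ⟨e, ψ⟩ hp ⟨e', ψ'⟩ hp' hEq
    dsimp only at hEq
    obtain ⟨hp1, hp2⟩ := Finset.mem_sigma.mp hp
    obtain ⟨hp1', hp2'⟩ := Finset.mem_sigma.mp hp'
    have he : e ∣ n := Nat.dvd_of_mem_divisors hp1
    have he' : e' ∣ n := Nat.dvd_of_mem_divisors hp1'
    have hψ : ψ.IsPrimitive := (Finset.mem_filter.mp hp2).2
    have hψ' : ψ'.IsPrimitive := (Finset.mem_filter.mp hp2').2
    have hee : e = e' := by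
      have h1 := conductor_changeLevel hn he ψ
      have h2 := conductor_changeLevel hn he' ψ'
      rw [hEq] at h1
      rw [← hψ, ← hψ', ← h1, h2]
    subst hee
    have : ψ = ψ' := changeLevel_injective he hEq
    rw [this]
  · intro χ _
    refine ⟨⟨χ.conductor, χ.primitiveCharacter⟩, ?_, ?_⟩
    · refine Finset.mem_sigma.mpr ⟨Nat.mem_divisors.mpr ⟨conductor_dvd_level χ, hn⟩, ?_⟩
      exact Finset.mem_filter.mpr ⟨Finset.mem_univ _, χ.primitiveCharacter_isPrimitive⟩
    · exact ((factorsThrough_conductor χ).eq_changeLevel).symm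
  · rintro ⟨e, ψ⟩ hp
    obtain ⟨hp1, _⟩ := Finset.mem_sigma.mp hp
    exact (changeLevel_intCast (Nat.dvd_of_mem_divisors hp1) ψ a ha).symm

/-- For any positive integer `d` and any integer `a`, the absolute value of the sum of
`χ(a)` over all primitive Dirichlet characters `χ` modulo `d` is at most `gcd(a - 1, d)`. -/
theorem stmt_3 (d : ℕ) (hd : 0 < d) (a : ℤ) :
    ‖∑ χ ∈ Finset.univ.filter (fun χ : DirichletCharacter ℂ d => χ.IsPrimitive),
        χ (a : ZMod d)‖ ≤ (Int.gcd (a - 1) d : ℝ) := by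
  by_cases ha : IsUnit ((a : ZMod d))
  · haveI : NeZero d := ⟨hd.ne'⟩
    have key : ∀ n, 0 < n → n ∈ {m : ℕ | m ∣ d} → (∑ i ∈ n.divisors,
        (fun e => ∑ ψ ∈ Finset.univ.filter
          (fun ψ : DirichletCharacter ℂ e => ψ.IsPrimitive), ψ ((a : ZMod e))) i)
        = (fun e => ∑ χ : DirichletCharacter ℂ e, χ ((a : ZMod e))) n := by
      intro n hn hnd
      have hdvd : n ∣ d := hnd
      have han : IsUnit ((a : ZMod n)) := by
        have := ha.map (ZMod.castHom hdvd (ZMod n))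
        rwa [map_intCast] at this
      exact sum_decomp hn.ne' a han
    have inv := (ArithmeticFunction.sum_eq_iff_sum_mul_moebius_eq_on {m : ℕ | m ∣ d}
      (fun m n hmn hn => hmn.trans hn)).mp key d hd (dvd_refl d)
    rw [← inv]
    have step1 : ‖∑ x ∈ d.divisorsAntidiagonal,
        ((ArithmeticFunction.moebius x.1 : ℂ) * ∑ χ : DirichletCharacter ℂ x.2, χ ((a : ZMod x.2)))‖
        ≤ ∑ x ∈ d.divisorsAntidiagonal,
          (if ((a : ZMod x.2) = 1) then ((x.2.totient : ℝ)) else 0) := by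
      refine (norm_sum_le _ _).trans (Finset.sum_le_sum fun x hx => ?_)
      have hx2 : x.2 ∣ d := (Nat.mem_divisorsAntidiagonal.mp hx).1 ▸ Dvd.intro_left x.1 rfl
      haveI : NeZero x.2 := neZero_of_dvd hd.ne' hx2
      haveI : NeZero (Monoid.exponent (ZMod x.2)ˣ) := ⟨Monoid.exponent_ne_zero_of_finite⟩
      haveI : NeZero ((Monoid.exponent (ZMod x.2)ˣ : ℕ) : ℂ) :=
        ⟨Nat.cast_ne_zero.mpr Monoid.exponent_ne_zero_of_finite⟩
      rw [DirichletCharacter.sum_characters_eq ℂ ((a : ZMod x.2)), norm_mul]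
      have hμ : ‖((ArithmeticFunction.moebius x.1 : ℤ) : ℂ)‖ ≤ 1 := by
        by_cases hsq : Squarefree x.1
        · rw [ArithmeticFunction.moebius_apply_of_squarefree hsq]
          push_cast
          rw [norm_pow]
          simp
        · simp [ArithmeticFunction.moebius_eq_zero_of_not_squarefree hsq]
      split_ifs with h
      · rw [Complex.norm_natCast]
        calc ‖((ArithmeticFunction.moebius x.1 : ℤ) : ℂ)‖ * (x.2.totient : ℝ)
            ≤ 1 * (x.2.totient : ℝ) := by
              exact mul_le_mul_of_nonneg_right hμ (by positivity)
          _ = (x.2.totient : ℝ) := one_mul _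
      · simp
    refine step1.trans ?_
    rw [Nat.sum_divisorsAntidiagonal'
      (f := fun _ j => if ((a : ZMod j) = 1) then ((j.totient : ℝ)) else 0)]
    set G : ℕ := Int.gcd (a - 1) d with hG
    have hGne : G ≠ 0 := by
      have : (d : ℤ) ≠ 0 := Int.natCast_ne_zero.mpr hd.ne'
      simpa [hG, Int.gcd_eq_zero_iff] using fun _ => this
    have hfil : Finset.filter (fun e => ((a : ZMod e) = 1)) d.divisors = G.divisors := by
      ext e
      have hiff : ((a : ZMod e) = 1) ↔ (e : ℤ) ∣ (a - 1) := by
        rw [← ZMod.intCast_zmod_eq_zero_iff_dvd]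
        push_cast
        rw [sub_eq_zero]
      simp only [Finset.mem_filter, Nat.mem_divisors, hiff]
      constructor
      · rintro ⟨⟨hed, _⟩, hdvd1⟩
        refine ⟨?_, hGne⟩
        rw [← Int.natCast_dvd_natCast]
        exact Int.dvd_coe_gcd hdvd1 (Int.natCast_dvd_natCast.mpr hed)
      · rintro ⟨heG, _⟩
        have h1 : (e : ℤ) ∣ (G : ℤ) := Int.natCast_dvd_natCast.mpr heG
        refine ⟨⟨?_, hd.ne'⟩, h1.trans (Int.gcd_dvd_left _ _)⟩
        rw [← Int.natCast_dvd_natCast]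
        exact h1.trans (Int.gcd_dvd_right _ _)
    refine le_of_eq ?_
    calc (∑ e ∈ d.divisors, if ((a : ZMod e) = 1) then ((e.totient : ℝ)) else 0)
        = ∑ e ∈ Finset.filter (fun e => ((a : ZMod e) = 1)) d.divisors, (e.totient : ℝ) :=
          (Finset.sum_filter _ _).symm
      _ = ∑ e ∈ G.divisors, (e.totient : ℝ) := by rw [hfil]
      _ = (G : ℝ) := by rw [← Nat.cast_sum]; rw [Nat.sum_totient]
  · have hzero : ∀ χ ∈ Finset.univ.filter
        (fun χ : DirichletCharacter ℂ d => χ.IsPrimitive), χ ((a : ZMod d)) = 0 :=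
      fun χ _ => χ.map_nonunit ha
    rw [Finset.sum_eq_zero hzero, norm_zero]
    positivity
end

section
/- Every odd ideal of the Gaussian integers ℤ[i] (i.e., an ideal coprime to (1+i)) has a unique generator z satisfying z ≡ 1 (mod 2(1+i)); such a z is called primary. Moreover the primary condition is multiplicative: if z and w are primary then zw is primary. -/
lemma key (w : GaussianInt) : (2 * ⟨1, 1⟩ : GaussianInt) ∣ w ↔ (4 ∣ w.re + w.im ∧ 4 ∣ w.im - w.re) := by
  have h22 : (2 * ⟨1, 1⟩ : GaussianInt) = ⟨2, 2⟩ := by ext <;> simp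
  rw [h22]
  constructor
  · rintro ⟨k, rfl⟩
    simp [Zsqrtd.re_mul, Zsqrtd.im_mul]
    omega
  · rintro ⟨h1, h2⟩
    refine ⟨⟨(w.re + w.im)/4, (w.im - w.re)/4⟩, ?_⟩
    ext <;> simp [Zsqrtd.re_mul, Zsqrtd.im_mul] <;> omega

-- classify units
lemma unit_cases (u : GaussianInt) (hu : IsUnit u) :
    u = 1 ∨ u = -1 ∨ u = ⟨0,1⟩ ∨ u = ⟨0,-1⟩ := by
  have hn : u.norm = 1 := (Zsqrtd.norm_eq_one_iff' (by norm_num) u).mpr hu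
  rw [Zsqrtd.norm] at hn
  have h1 : u.re * u.re + u.im * u.im = 1 := by linarith
  have h2 : u.re ≤ 1 ∧ -1 ≤ u.re ∧ u.im ≤ 1 ∧ -1 ≤ u.im := by
    refine ⟨?_, ?_, ?_, ?_⟩ <;> nlinarith
  have h3 : (u.re = 1 ∧ u.im = 0) ∨ (u.re = -1 ∧ u.im = 0) ∨ (u.re = 0 ∧ u.im = 1) ∨ (u.re = 0 ∧ u.im = -1) := by
    rcases h2 with ⟨a, b, c, d⟩
    have hre : u.re = -1 ∨ u.re = 0 ∨ u.re = 1 := by omega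
    have him : u.im = -1 ∨ u.im = 0 ∨ u.im = 1 := by omega
    rcases hre with h|h|h <;> rcases him with h'|h'|h' <;> rw [h, h'] at h1 <;> simp_all <;> omega
  rcases h3 with ⟨h, h'⟩|⟨h, h'⟩|⟨h, h'⟩|⟨h, h'⟩
  · left; ext <;> simp [h, h']
  · right; left; ext <;> simp [h, h']
  · right; right; left; ext <;> simp [h, h']
  · right; right; right; ext <;> simp [h, h']

lemma assoc_unit (u g : GaussianInt) (hu : IsUnit u) : Associated (u * g) g :=
  (associated_isUnit_mul_left_iff hu).mpr (Associated.refl g)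


/-- Every odd ideal of the Gaussian integers `ℤ[i]` (i.e., an ideal coprime to `(1+i)`)
has a unique generator `z` satisfying `z ≡ 1 (mod 2(1+i))`; such a `z` is called primary.
Moreover the primary condition is multiplicative: if `z` and `w` are primary then `z*w`
is primary. -/
theorem stmt_5 :
    (∀ I : Ideal GaussianInt, I ⊔ Ideal.span {(⟨1, 1⟩ : GaussianInt)} = ⊤ →
      ∃! z : GaussianInt, Ideal.span {z} = I ∧ (2 * ⟨1, 1⟩ : GaussianInt) ∣ (z - 1)) ∧
    (∀ z w : GaussianInt, (2 * ⟨1, 1⟩ : GaussianInt) ∣ (z - 1) →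
      (2 * ⟨1, 1⟩ : GaussianInt) ∣ (w - 1) → (2 * ⟨1, 1⟩ : GaussianInt) ∣ (z * w - 1)) := by
  constructor
  · intro I hI
    obtain ⟨g, rfl⟩ : ∃ g, I = Ideal.span {g} := (IsPrincipalIdealRing.principal I).1
    -- g is odd
    have hcop : IsCoprime g (⟨1,1⟩ : GaussianInt) := by
      rw [← Ideal.isCoprime_span_singleton_iff, Ideal.isCoprime_iff_sup_eq]
      exact hI
    have hodd : ¬ (2 ∣ g.re + g.im) := by
      intro ⟨t, ht⟩
      have hdvd : (⟨1,1⟩ : GaussianInt) ∣ g := by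
        refine ⟨⟨t, g.im - t⟩, ?_⟩
        ext <;> simp [Zsqrtd.re_mul, Zsqrtd.im_mul] <;> omega
      have := hcop.isUnit_of_dvd' hdvd dvd_rfl
      rcases unit_cases _ this with h|h|h|h <;> (rw [Zsqrtd.ext_iff] at h; simp at h) <;> omega
    -- uniqueness helper
    have huniq : ∀ y z : GaussianInt, ¬ (2 ∣ z.re + z.im) →
        (2 * ⟨1, 1⟩ : GaussianInt) ∣ (z - 1) → (2 * ⟨1, 1⟩ : GaussianInt) ∣ (y - 1) →
        Associated y z → y = z := by
      intro y z hzodd hz hy hassoc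
      obtain ⟨u, hu⟩ := hassoc.symm
      rcases unit_cases u.val u.isUnit with h|h|h|h <;> rw [h] at hu
      · rw [← hu]; ring
      · exfalso
        rw [key] at hz hy
        rw [← hu] at hy
        simp [Zsqrtd.re_mul, Zsqrtd.im_mul] at hy
        simp at hz hy
        omega
      · exfalso
        rw [key] at hz hy
        rw [← hu] at hy
        simp [Zsqrtd.re_mul, Zsqrtd.im_mul] at hy
        simp at hz hy
        omega
      · exfalso
        rw [key] at hz hy
        rw [← hu] at hy
        simp [Zsqrtd.re_mul, Zsqrtd.im_mul] at hy
        simp at hz hy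
        omega
    have hzodd : ∀ z : GaussianInt, (2 * ⟨1, 1⟩ : GaussianInt) ∣ (z - 1) → ¬ (2 ∣ z.re + z.im) := by
      intro z hz
      rw [key] at hz
      simp at hz
      omega
    -- existence: case split
    have hcases : (4 ∣ g.re + g.im - 1 ∧ 4 ∣ g.im - g.re + 1) ∨
        (4 ∣ g.re + g.im + 1 ∧ 4 ∣ g.im - g.re - 1) ∨
        (4 ∣ g.re - g.im - 1 ∧ 4 ∣ g.re + g.im + 1) ∨
        (4 ∣ g.im - g.re - 1 ∧ 4 ∣ g.re + g.im - 1) := by omega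
    have mk : ∀ z : GaussianInt, Associated z g → (2 * ⟨1, 1⟩ : GaussianInt) ∣ (z - 1) →
        ∃! z' : GaussianInt, Ideal.span {z'} = Ideal.span {g} ∧ (2 * ⟨1, 1⟩ : GaussianInt) ∣ (z' - 1) := by
      intro z hassoc hz
      refine ⟨z, ⟨Ideal.span_singleton_eq_span_singleton.mpr hassoc, hz⟩, ?_⟩
      intro y ⟨hspan, hy⟩
      exact huniq y z (hzodd z hz) hz hy
        ((Ideal.span_singleton_eq_span_singleton.mp hspan).trans hassoc.symm)
    rcases hcases with ⟨h1, h2⟩|⟨h1, h2⟩|⟨h1, h2⟩|⟨h1, h2⟩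
    · exact mk g (Associated.refl g) (by rw [key]; constructor <;> simp <;> omega)
    · refine mk (-g) ?_ (by rw [key]; constructor <;> simp <;> omega)
      exact (Associated.refl g).neg_left
    · refine mk (⟨0,1⟩ * g) (assoc_unit _ _ ⟨⟨⟨0,1⟩, ⟨0,-1⟩, by ext <;> simp [Zsqrtd.re_mul, Zsqrtd.im_mul], by ext <;> simp [Zsqrtd.re_mul, Zsqrtd.im_mul]⟩, rfl⟩) ?_
      rw [key]; constructor <;> simp [Zsqrtd.re_mul, Zsqrtd.im_mul] <;> omega
    · refine mk (⟨0,-1⟩ * g) (assoc_unit _ _ ⟨⟨⟨0,-1⟩, ⟨0,1⟩, by ext <;> simp [Zsqrtd.re_mul, Zsqrtd.im_mul], by ext <;> simp [Zsqrtd.re_mul, Zsqrtd.im_mul]⟩, rfl⟩) ?_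
      rw [key]; constructor <;> simp [Zsqrtd.re_mul, Zsqrtd.im_mul] <;> omega
  · intro z w hz hw
    have : z * w - 1 = z * (w - 1) + (z - 1) := by ring
    rw [this]
    exact dvd_add (Dvd.dvd.mul_left hw z) hz
end

section
/- Let z₁, z₂ ∈ ℤ[i] with gcd(z₁, conj(z₁)) = 1 and gcd(z₂, conj(z₂)) = 1 and gcd(z₁, z₂) = 1. Set Δ = Im(conj(z₁)·z₂). Then Δ is coprime (as a rational integer) to |z₁|²·|z₂|². -/
private lemma gcd_eq_one_of_isCoprime_cast (a b : ℤ)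
    (h : IsCoprime (a : GaussianInt) (b : GaussianInt)) : Int.gcd a b = 1 := by
  have hd1 : ((Int.gcd a b : ℤ) : GaussianInt) ∣ (a : GaussianInt) :=
    by exact_mod_cast (Int.gcd_dvd_left (a := a) (b := b))
  have hd2 : ((Int.gcd a b : ℤ) : GaussianInt) ∣ (b : GaussianInt) :=
    by exact_mod_cast (Int.gcd_dvd_right (a := a) (b := b))
  have hu := h.isUnit_of_dvd' hd1 hd2
  have hn : IsUnit (Zsqrtd.norm ((Int.gcd a b : ℤ) : GaussianInt)) :=
    (Zsqrtd.isUnit_iff_norm_isUnit _).mp hu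
  rw [Zsqrtd.norm_intCast] at hn
  have hg : (0:ℤ) ≤ (Int.gcd a b : ℤ) := Int.natCast_nonneg _
  rcases Int.isUnit_iff.mp hn with h' | h'
  · rcases mul_self_eq_one_iff.mp h' with h'' | h''
    · exact_mod_cast h''
    · omega
  · nlinarith [sq_nonneg ((Int.gcd a b : ℤ))]

/-- Let `z₁, z₂ ∈ ℤ[i]` with `gcd(z₁, conj z₁) = 1`, `gcd(z₂, conj z₂) = 1` and
`gcd(z₁, z₂) = 1`. Set `Δ = Im(conj(z₁)·z₂)`. Then `Δ` is coprime (as a rational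
integer) to `|z₁|²·|z₂|²`. -/
theorem stmt_6 (z₁ z₂ : GaussianInt)
    (h₁ : IsCoprime z₁ (star z₁)) (h₂ : IsCoprime z₂ (star z₂))
    (h₁₂ : IsCoprime z₁ z₂) :
    Int.gcd ((star z₁ * z₂).im) (z₁.norm * z₂.norm) = 1 := by
  set Δ : ℤ := (star z₁ * z₂).im with hΔ
  -- key identity: 2iΔ = star z₁ * z₂ - z₁ * star z₂
  have key : (⟨0, 2⟩ : GaussianInt) * (Δ : GaussianInt)
      = star z₁ * z₂ - z₁ * star z₂ := by
    ext <;> simp [Zsqrtd.star_mk, Zsqrtd.re_mul, Zsqrtd.im_mul, hΔ] <;> ring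
  have h₁₂' : IsCoprime (star z₁) (star z₂) := h₁₂.map (starRingEnd GaussianInt)
  -- coprimality with each factor
  have c1 : IsCoprime z₁ ((⟨0, 2⟩ : GaussianInt) * (Δ : GaussianInt)) := by
    rw [key, sub_eq_add_neg, ← mul_neg]
    exact (h₁.mul_right h₁₂).add_mul_left_right _
  have c2 : IsCoprime (star z₁) ((⟨0, 2⟩ : GaussianInt) * (Δ : GaussianInt)) := by
    rw [key, show star z₁ * z₂ - z₁ * star z₂ = -(z₁ * star z₂) + star z₁ * z₂ by ring]
    exact ((h₁.symm.mul_right h₁₂').neg_right).add_mul_left_right _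
  have c3 : IsCoprime z₂ ((⟨0, 2⟩ : GaussianInt) * (Δ : GaussianInt)) := by
    rw [key, show star z₁ * z₂ - z₁ * star z₂ = -(z₁ * star z₂) + z₂ * star z₁ by ring]
    exact ((h₁₂.symm.mul_right h₂).neg_right).add_mul_left_right _
  have c4 : IsCoprime (star z₂) ((⟨0, 2⟩ : GaussianInt) * (Δ : GaussianInt)) := by
    rw [key, sub_eq_add_neg, show star z₁ * z₂ + -(z₁ * star z₂) = star z₁ * z₂ + star z₂ * (-z₁) by ring]
    exact (h₁₂'.symm.mul_right h₂.symm).add_mul_left_right _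
  have cprod : IsCoprime ((z₁ * star z₁) * (z₂ * star z₂))
      ((⟨0, 2⟩ : GaussianInt) * (Δ : GaussianInt)) :=
    ((c1.mul_left c2).mul_left (c3.mul_left c4))
  have cΔ : IsCoprime (Δ : GaussianInt) (((z₁.norm * z₂.norm : ℤ)) : GaussianInt) := by
    have := (cprod.symm.of_mul_left_right)
    rw [Int.cast_mul, Zsqrtd.norm_eq_mul_conj, Zsqrtd.norm_eq_mul_conj]
    exact this
  exact gcd_eq_one_of_isCoprime_cast _ _ cΔ
end

section
/- Let w, z₁, z₂ ∈ ℤ[i] with gcd(w, conj(w)) = 1, and set b₁ = Re(conj(w)z₁), b₂ = Re(conj(w)z₂), Δ = Im(conj(z₁)z₂), and b₀ = gcd(b₁, b₂) (in ℤ). Then b₀ divides Δ. -/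
/-- Let `w, z₁, z₂ ∈ ℤ[i]` with `gcd(w, conj w) = 1`, and set `b₁ = Re(conj(w)z₁)`,
`b₂ = Re(conj(w)z₂)`, `Δ = Im(conj(z₁)z₂)`, and `b₀ = gcd(b₁, b₂)` (in `ℤ`).
Then `b₀` divides `Δ`. -/
theorem stmt_8 (w z₁ z₂ : GaussianInt) (hw : IsCoprime w (star w)) :
    (Int.gcd ((star w * z₁).re) ((star w * z₂).re) : ℤ) ∣ (star z₁ * z₂).im := by
  set b₁ := (star w * z₁).re with hb₁
  set b₂ := (star w * z₂).re with hb₂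
  set Δ := (star z₁ * z₂).im with hΔ
  set b₀ : ℤ := (Int.gcd b₁ b₂ : ℤ) with hb₀
  have key : (b₁ : GaussianInt) * z₂ - (b₂ : GaussianInt) * z₁
      = (Δ : GaussianInt) * w * ⟨0, 1⟩ := by
    ext <;> simp [hb₁, hb₂, hΔ, Zsqrtd.re_mul, Zsqrtd.im_mul] <;> ring
  have hdvd : (b₀ : GaussianInt) ∣ (b₁ : GaussianInt) * z₂ - (b₂ : GaussianInt) * z₁ :=
    dvd_sub (Dvd.dvd.mul_right (map_dvd (Int.castRingHom GaussianInt)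
        (Int.gcd_dvd_left _ _ : b₀ ∣ b₁)) _)
      (Dvd.dvd.mul_right (map_dvd (Int.castRingHom GaussianInt)
        (Int.gcd_dvd_right _ _ : b₀ ∣ b₂)) _)
  rw [key] at hdvd
  have hunit : IsUnit (⟨0,1⟩ : GaussianInt) := by
    refine IsUnit.of_mul_eq_one ⟨0,-1⟩ ?_
    ext <;> simp
  have h1 : (b₀ : GaussianInt) ∣ (Δ : GaussianInt) * w :=
    (IsUnit.dvd_mul_right hunit).1 hdvd
  have h2 : (b₀ : GaussianInt) ∣ (Δ : GaussianInt) * star w := by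
    have := map_dvd (starRingEnd GaussianInt) h1
    simpa [starRingEnd_apply] using this
  obtain ⟨u, v, huv⟩ := hw
  have h3 : (b₀ : GaussianInt) ∣ (Δ : GaussianInt) := by
    have : (Δ : GaussianInt) = u * ((Δ:GaussianInt) * w) + v * ((Δ:GaussianInt) * star w) := by
      rw [mul_left_comm, mul_left_comm v, ← mul_add, huv, mul_one]
    rw [this]
    exact dvd_add (h1.mul_left u) (h2.mul_left v)
  exact_mod_cast (Zsqrtd.intCast_dvd_intCast _ _).1 h3
end
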